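/- The map π given by π(ζ, η) = (η/ζ, β(ζ³ + 1/ζ³)) sends any point (ζ, η) with ζ ≠ 0 satisfying η³ + α η ζ² + β ζ⁶ + γ ζ³ − β = 0 to a point (x, y) satisfying y² = (x³ + α x + γ)² + 4β². -/

import Mathlib

/-- The quotient map `π(ζ,η) = (η/ζ, β(ζ³ + 1/ζ³))` sends the cyclic
charge-3 spectral curve to the quotient curve. -/
theorem quotient_map_to_genus2 (α β γ : ℂ) (ζ η : ℂ) (hζ : ζ ≠ 0)
    (hcurve : η ^ 3 + α * η * ζ ^ 2 + β * ζ ^ 6 + γ * ζ ^ 3 - β = 0) :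
    (β * (ζ ^ 3 + 1 / ζ ^ 3)) ^ 2
      = ((η / ζ) ^ 3 + α * (η / ζ) + γ) ^ 2 + 4 * β ^ 2 := by
  have h : η ^ 3 + α * η * ζ ^ 2 + γ * ζ ^ 3 = β - β * ζ ^ 6 := by
    linear_combination hcurve
  field_simp
  linear_combination (-1 * (η ^ 3 + α * η * ζ ^ 2 + γ * ζ ^ 3 + β - β * ζ ^ 6)) * h
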